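/- Let c₁, c₂, c₃ be oriented circles whose discriminant D = Q(c₁ − c₂) · Q(c₁ − c₃) · Q(c₂ − c₃) is strictly positive. Then the oriented Apollonius problem for (c₁, c₂, c₃) has exactly 2 solutions. -/

import Mathlib

open RealInnerProductSpace

noncomputable section

/-- The Euclidean plane. -/
abbrev Pl := EuclideanSpace ℝ (Fin 2)

/-- The Lorentz quadratic form `Q(x, r) = ‖x‖² − r²` on the space of oriented circles. -/
def Q (c : Pl × ℝ) : ℝ := ‖c.1‖ ^ 2 - c.2 ^ 2

/-- Solutions of the oriented Apollonius problem for the oriented circles `c₁, c₂, c₃`: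
either an oriented circle `d` with `Q(d − cᵢ) = 0` for all `i`, or an oriented line
`(u, t)` (with `‖u‖ = 1`, representing `{p : ⟪u, p⟫ = t}`) tangent to every `cᵢ`,
i.e. `⟪u, xᵢ⟫ − t = rᵢ` for all `i`. The solution set is the disjoint union of the two. -/
def OrientedApolloniusSolutions (c₁ c₂ c₃ : Pl × ℝ) : Type :=
  {d : Pl × ℝ // Q (d - c₁) = 0 ∧ Q (d - c₂) = 0 ∧ Q (d - c₃) = 0} ⊕
  {l : Pl × ℝ // ‖l.1‖ = 1 ∧ ⟪l.1, c₁.1⟫ - l.2 = c₁.2 ∧ ⟪l.1, c₂.1⟫ - l.2 = c₂.2 ∧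
    ⟪l.1, c₃.1⟫ - l.2 = c₃.2}

open Matrix Module

namespace OA

abbrev V5 := Fin 5 → ℝ

def bR (v w : V5) : ℝ :=
  v 2 * w 2 + v 3 * w 3 - v 4 * w 4 - (v 0 * w 1 + v 1 * w 0) / 2

lemma bR_comm (v w : V5) : bR v w = bR w v := by unfold bR; ring

lemma Q_coord (c : Pl × ℝ) : Q c = c.1 0 ^ 2 + c.1 1 ^ 2 - c.2 ^ 2 := by
  rw [Q, ← real_inner_self_eq_norm_sq]
  simp only [PiLp.inner_apply, Fin.sum_univ_two, RCLike.inner_apply, conj_trivial]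
  ring

lemma inner_coord (u x : Pl) : ⟪u, x⟫ = u 0 * x 0 + u 1 * x 1 := by
  simp [PiLp.inner_apply, Fin.sum_univ_two]; ring

lemma norm_sq_coord (x : Pl) : ‖x‖ ^ 2 = x 0 ^ 2 + x 1 ^ 2 := by
  rw [← real_inner_self_eq_norm_sq]; simp only [PiLp.inner_apply, Fin.sum_univ_two, RCLike.inner_apply, conj_trivial]; ring

def lift (c : Pl × ℝ) : V5 := ![1, Q c, c.1 0, c.1 1, c.2]

def liftL (l : Pl × ℝ) : V5 := ![0, 2 * l.2, l.1 0, l.1 1, 1]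

@[simp] lemma lift_0 (c : Pl × ℝ) : lift c 0 = 1 := rfl
@[simp] lemma lift_1 (c : Pl × ℝ) : lift c 1 = Q c := rfl
@[simp] lemma lift_2 (c : Pl × ℝ) : lift c 2 = c.1 0 := rfl
@[simp] lemma lift_3 (c : Pl × ℝ) : lift c 3 = c.1 1 := rfl
@[simp] lemma lift_4 (c : Pl × ℝ) : lift c 4 = c.2 := rfl
@[simp] lemma liftL_0 (l : Pl × ℝ) : liftL l 0 = 0 := rfl
@[simp] lemma liftL_1 (l : Pl × ℝ) : liftL l 1 = 2 * l.2 := rfl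
@[simp] lemma liftL_2 (l : Pl × ℝ) : liftL l 2 = l.1 0 := rfl
@[simp] lemma liftL_3 (l : Pl × ℝ) : liftL l 3 = l.1 1 := rfl
@[simp] lemma liftL_4 (l : Pl × ℝ) : liftL l 4 = 1 := rfl

lemma sub_coord (c d : Pl × ℝ) (i : Fin 2) : (c - d).1 i = c.1 i - d.1 i := by simp

lemma sub_snd (c d : Pl × ℝ) : (c - d).2 = c.2 - d.2 := rfl

lemma bR_lift_lift (c d : Pl × ℝ) : bR (lift c) (lift d) = -(Q (d - c)) / 2 := by
  simp only [bR, lift_0, lift_1, lift_2, lift_3, lift_4, Q_coord, sub_coord, sub_snd]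
  ring

lemma bR_lift_liftL (c l : Pl × ℝ) : bR (lift c) (liftL l) = ⟪l.1, c.1⟫ - l.2 - c.2 := by
  simp only [bR, lift_0, lift_1, lift_2, lift_3, lift_4, liftL_0, liftL_1, liftL_2, liftL_3,
    liftL_4, Q_coord, inner_coord]
  ring

lemma bR_liftL_liftL (l : Pl × ℝ) : bR (liftL l) (liftL l) = ‖l.1‖ ^ 2 - 1 := by
  simp only [bR, liftL_0, liftL_1, liftL_2, liftL_3, liftL_4, norm_sq_coord]
  ring

def chat (c₁ c₂ c₃ : Pl × ℝ) : Fin 3 → V5 := ![lift c₁, lift c₂, lift c₃]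

def X (c₁ c₂ c₃ : Pl × ℝ) : Set V5 :=
  {v | (∀ i, bR (chat c₁ c₂ c₃ i) v = 0) ∧ bR v v = 0 ∧ (v 0 = 1 ∨ (v 0 = 0 ∧ v 4 = 1))}

/-- bijection between the solutions and the normalized null vectors. -/
lemma card_sol (c₁ c₂ c₃ : Pl × ℝ) :
    Nat.card (OrientedApolloniusSolutions c₁ c₂ c₃) = Nat.card (X c₁ c₂ c₃) := by
  have memC : ∀ d : {d : Pl × ℝ // Q (d - c₁) = 0 ∧ Q (d - c₂) = 0 ∧ Q (d - c₃) = 0},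
      lift d.1 ∈ X c₁ c₂ c₃ := by
    rintro ⟨d, h1, h2, h3⟩
    refine ⟨?_, ?_, Or.inl rfl⟩
    · intro i
      fin_cases i <;>
        simp [chat, bR_lift_lift, h1, h2, h3]
    · rw [show (lift d : V5) = lift d from rfl]
      rw [bR_lift_lift d d]
      simp [Q]
  have memL : ∀ l : {l : Pl × ℝ // ‖l.1‖ = 1 ∧ ⟪l.1, c₁.1⟫ - l.2 = c₁.2 ∧
      ⟪l.1, c₂.1⟫ - l.2 = c₂.2 ∧ ⟪l.1, c₃.1⟫ - l.2 = c₃.2},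
      liftL l.1 ∈ X c₁ c₂ c₃ := by
    rintro ⟨l, h0, h1, h2, h3⟩
    refine ⟨?_, ?_, Or.inr ⟨rfl, rfl⟩⟩
    · intro i
      rw [inner_coord] at h1 h2 h3
      fin_cases i <;> simp [chat, bR_lift_liftL, inner_coord] <;> linarith
    · rw [bR_liftL_liftL, h0]; norm_num
  set f : OrientedApolloniusSolutions c₁ c₂ c₃ → (X c₁ c₂ c₃) := fun s =>
    Sum.rec (fun d => ⟨lift d.1, memC d⟩) (fun l => ⟨liftL l.1, memL l⟩) s with hf
  have hinj : Function.Injective f := by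
    rintro (⟨d, hd⟩ | ⟨l, hl⟩) (⟨d', hd'⟩ | ⟨l', hl'⟩) h <;>
      simp only [hf, Subtype.mk.injEq] at h
    · have h2 := congrFun h 2
      have h3 := congrFun h 3
      have h4 := congrFun h 4
      simp only [lift_2, lift_3, lift_4] at h2 h3 h4
      have hfst : d.1 = d'.1 := by ext i; fin_cases i <;> assumption
      have hdd : d = d' := Prod.ext_iff.mpr ⟨hfst, h4⟩
      subst hdd
      rfl
    · have := congrFun h 0; simp at this
    · have := congrFun h 0; simp at this
    · have h2 := congrFun h 2
      have h3 := congrFun h 3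
      have h1 := congrFun h 1
      simp only [liftL_1, liftL_2, liftL_3] at h1 h2 h3
      have hfst : l.1 = l'.1 := by ext i; fin_cases i <;> assumption
      have hsnd : l.2 = l'.2 := by linarith
      have hll : l = l' := Prod.ext_iff.mpr ⟨hfst, hsnd⟩
      subst hll
      rfl
  have hsurj : Function.Surjective f := by
    rintro ⟨v, hv1, hv2, hv3⟩
    rcases hv3 with h0 | ⟨h0, h4⟩
    · -- a circle
      set d : Pl × ℝ := ((WithLp.equiv 2 (Fin 2 → ℝ)).symm ![v 2, v 3], v 4) with hd
      have hc0 : d.1 0 = v 2 := rfl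
      have hc1 : d.1 1 = v 3 := rfl
      have hlift : lift d = v := by
        funext i
        fin_cases i
        · simp [h0.symm]
        · show Q d = v 1
          rw [Q_coord, hc0, hc1]
          show v 2 ^ 2 + v 3 ^ 2 - v 4 ^ 2 = v 1
          unfold bR at hv2
          rw [h0] at hv2
          linarith
        · exact hc0
        · exact hc1
        · rfl
      have tangent : ∀ c : Pl × ℝ, bR (lift c) v = 0 → Q (d - c) = 0 := by
        intro c hc
        rw [← hlift, bR_lift_lift] at hc
        linarith
      refine ⟨Sum.inl ⟨d, tangent c₁ (hv1 0), tangent c₂ (hv1 1), tangent c₃ (hv1 2)⟩, ?_⟩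
      simp only [hf]
      exact Subtype.ext hlift
    · -- a line
      set l : Pl × ℝ := ((WithLp.equiv 2 (Fin 2 → ℝ)).symm ![v 2, v 3], v 1 / 2) with hl
      have hc0 : l.1 0 = v 2 := rfl
      have hc1 : l.1 1 = v 3 := rfl
      have hlift : liftL l = v := by
        funext i
        fin_cases i
        · simp [h0.symm]
        · show 2 * (v 1 / 2) = v 1; ring
        · exact hc0
        · exact hc1
        · simp [h4.symm]
      have hnorm : ‖l.1‖ = 1 := by
        have hsq : ‖l.1‖ ^ 2 = 1 := by
          rw [norm_sq_coord, hc0, hc1]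
          unfold bR at hv2
          rw [h0, h4] at hv2
          linarith
        nlinarith [norm_nonneg l.1]
      have tangent : ∀ c : Pl × ℝ, bR (lift c) v = 0 → ⟪l.1, c.1⟫ - l.2 = c.2 := by
        intro c hc
        rw [← hlift, bR_lift_liftL] at hc
        linarith
      refine ⟨Sum.inr ⟨l, hnorm, tangent c₁ (hv1 0), tangent c₂ (hv1 1), tangent c₃ (hv1 2)⟩, ?_⟩
      simp only [hf]
      exact Subtype.ext hlift
  exact Nat.card_congr (Equiv.ofBijective f ⟨hinj, hsurj⟩)

/-- `bR w ·` as a linear map. -/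
def bRl (w : V5) : V5 →ₗ[ℝ] ℝ where
  toFun v := bR w v
  map_add' u v := by simp [bR, Pi.add_apply]; ring
  map_smul' t v := by simp [bR, Pi.smul_apply, smul_eq_mul]; ring

@[simp] lemma bRl_apply (w v : V5) : bRl w v = bR w v := rfl


set_option maxHeartbeats 800000 in
lemma gram_det_pos (bF : Basis (Fin 5) ℝ V5) :
    0 < (Matrix.of fun i j => bR (bF i) (bF j)).det := by
  set M₀ : Matrix (Fin 5) (Fin 5) ℝ :=
    !![0, -(1/2), 0, 0, 0; -(1/2), 0, 0, 0, 0; 0, 0, 1, 0, 0; 0, 0, 0, 1, 0; 0, 0, 0, 0, -1]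
    with hM₀
  have hM0det : M₀.det = 1 / 4 := by
    simp [hM₀, Matrix.det_succ_row_zero, Fin.sum_univ_succ, Fin.succAbove]
    norm_num
  have hbRM : ∀ v w : V5, bR v w = v ⬝ᵥ M₀ *ᵥ w := by
    intro v w
    simp [bR, hM₀, Matrix.mulVec, dotProduct, Fin.sum_univ_five,
      Matrix.cons_val_zero, Matrix.cons_val_one, Matrix.head_cons, Matrix.cons_val_two,
      Matrix.cons_val_three, Matrix.cons_val_four, Matrix.tail_cons, Matrix.head_fin_const,
      Matrix.vecHead, Matrix.vecTail]
    ring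
  set P : Matrix (Fin 5) (Fin 5) ℝ := Matrix.of fun k i => bF i k with hP
  have hGramP : (Matrix.of fun i j => bR (bF i) (bF j)) = Pᵀ * M₀ * P := by
    ext i j
    show bR (bF i) (bF j) = (Pᵀ * M₀ * P) i j
    rw [hbRM]
    simp only [Matrix.mul_apply, Matrix.transpose_apply, hP, Matrix.of_apply, Matrix.mulVec,
      dotProduct, Fin.sum_univ_five]
    ring
  have hPmat : P = (Pi.basisFun ℝ (Fin 5)).toMatrix ⇑bF := by
    ext i j
    simp [hP, Basis.toMatrix_apply]
  have hdetP : P.det ≠ 0 := by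
    have hflip := Basis.toMatrix_mul_toMatrix_flip (Pi.basisFun ℝ (Fin 5)) bF
    have h1 : P.det * (bF.toMatrix ⇑(Pi.basisFun ℝ (Fin 5))).det = 1 := by
      rw [hPmat, ← Matrix.det_mul, hflip, Matrix.det_one]
    intro h0
    rw [h0, zero_mul] at h1
    norm_num at h1
  rw [hGramP, Matrix.det_mul, Matrix.det_mul, Matrix.det_transpose, hM0det]
  have : P.det ^ 2 > 0 := by positivity
  nlinarith

lemma gram_reindex (bV : Basis (Fin 3 ⊕ Fin 2) ℝ V5) :
    (Matrix.of fun i j : Fin 5 =>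
        bR (bV.reindex finSumFinEquiv i) (bV.reindex finSumFinEquiv j)).det
      = (Matrix.of fun i j => bR (bV i) (bV j)).det := by
  have : (Matrix.of fun i j : Fin 5 =>
        bR (bV.reindex finSumFinEquiv i) (bV.reindex finSumFinEquiv j))
      = (Matrix.reindex finSumFinEquiv finSumFinEquiv)
          (Matrix.of fun i j => bR (bV i) (bV j)) := by
    ext i j
    simp [Matrix.reindex_apply, Matrix.submatrix_apply, Module.Basis.reindex_apply]
  rw [this, Matrix.det_reindex_self]

lemma gram_block (ch : Fin 3 → V5) (wv : Fin 2 → V5)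
    (h : ∀ (j : Fin 2) (i : Fin 3), bR (ch i) (wv j) = 0) :
    (Matrix.of fun i j => bR (Sum.elim ch wv i) (Sum.elim ch wv j)).det
      = (Matrix.of fun i j => bR (ch i) (ch j)).det *
        (bR (wv 0) (wv 0) * bR (wv 1) (wv 1) - bR (wv 0) (wv 1) ^ 2) := by
  have hblocks : (Matrix.of fun i j => bR (Sum.elim ch wv i) (Sum.elim ch wv j))
      = Matrix.fromBlocks (Matrix.of fun i j => bR (ch i) (ch j)) 0 0
          (Matrix.of fun i j => bR (wv i) (wv j)) := by
    ext i j
    rcases i with i | i <;> rcases j with j | j <;>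
      simp [Matrix.fromBlocks, h, bR_comm (wv _) (ch _)]
  rw [hblocks, Matrix.det_fromBlocks_zero₁₂, Matrix.det_fin_two]
  simp only [Matrix.of_apply]
  rw [bR_comm (wv 1) (wv 0)]
  ring

set_option maxHeartbeats 1000000 in
set_option maxRecDepth 8000 in
lemma exists_basis (c₁ c₂ c₃ : Pl × ℝ)
    (hD : 0 < Q (c₁ - c₂) * Q (c₁ - c₃) * Q (c₂ - c₃)) :
    ∃ w0 w1 : V5, (∀ i, bR (chat c₁ c₂ c₃ i) w0 = 0) ∧ (∀ i, bR (chat c₁ c₂ c₃ i) w1 = 0) ∧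
      (∀ v : V5, (∀ i, bR (chat c₁ c₂ c₃ i) v = 0) → ∃ x y : ℝ, v = x • w0 + y • w1) ∧
      bR w0 w0 * bR w1 w1 < bR w0 w1 ^ 2 := by
  set ch := chat c₁ c₂ c₃ with hch
  set G : Matrix (Fin 3) (Fin 3) ℝ := Matrix.of fun i j => bR (ch i) (ch j) with hG
  have hdetG : G.det = -(Q (c₁ - c₂) * Q (c₁ - c₃) * Q (c₂ - c₃)) / 4 := by
    rw [Matrix.det_fin_three]
    simp only [hG, Matrix.of_apply, hch, chat, Matrix.cons_val_zero, Matrix.cons_val_one,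
      Matrix.head_cons, Matrix.cons_val_two, Matrix.tail_cons, bR_lift_lift]
    simp only [Q_coord, sub_coord, sub_snd]
    ring
  have hdetne : G.det ≠ 0 := by rw [hdetG]; intro h; nlinarith
  have hdetneg : G.det < 0 := by rw [hdetG]; nlinarith
  have hGunit : IsUnit G.det := isUnit_iff_ne_zero.mpr hdetne
  have hGG : G * G⁻¹ = 1 := Matrix.mul_nonsing_inv G hGunit
  have hGG' : G⁻¹ * G = 1 := Matrix.nonsing_inv_mul G hGunit
  set L : V5 →ₗ[ℝ] (Fin 3 → ℝ) := LinearMap.pi (fun i => bRl (ch i)) with hL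
  have hLapp : ∀ (v : V5) (i : Fin 3), L v i = bR (ch i) v := fun v i => rfl
  have hLsurj : Function.Surjective L := by
    intro t
    refine ⟨∑ j, (G⁻¹ *ᵥ t) j • ch j, ?_⟩
    funext i
    rw [hLapp]
    have e1 : bR (ch i) (∑ j, (G⁻¹ *ᵥ t) j • ch j)
        = ∑ j, (G⁻¹ *ᵥ t) j * bR (ch i) (ch j) := by
      rw [← bRl_apply, map_sum]
      apply Finset.sum_congr rfl
      intro j _
      simp only [_root_.map_smul, smul_eq_mul, bRl_apply]
    rw [e1]
    have e2 : ∑ j, (G⁻¹ *ᵥ t) j * bR (ch i) (ch j) = (G *ᵥ (G⁻¹ *ᵥ t)) i := by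
      simp only [Matrix.mulVec, dotProduct, hG, Matrix.of_apply]
      apply Finset.sum_congr rfl
      intro j _
      ring
    rw [e2, Matrix.mulVec_mulVec, hGG, Matrix.one_mulVec]
  have h5 : finrank ℝ V5 = 5 := Module.finrank_fin_fun ℝ
  have hker : finrank ℝ (LinearMap.ker L) = 2 := by
    have h3 : finrank ℝ (Fin 3 → ℝ) = 3 := Module.finrank_fin_fun ℝ
    have hrn := LinearMap.finrank_range_add_finrank_ker L
    rw [LinearMap.range_eq_top.mpr hLsurj, finrank_top, h3, h5] at hrn
    omega
  have bW : Basis (Fin 2) ℝ (LinearMap.ker L) := Module.finBasisOfFinrankEq ℝ _ hker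
  set wv : Fin 2 → V5 := fun j => (bW j : V5) with hwv
  have hWmem : ∀ (j : Fin 2) (i : Fin 3), bR (ch i) (wv j) = 0 := by
    intro j i
    have := (bW j).2
    rw [LinearMap.mem_ker] at this
    have := congrFun this i
    rw [hLapp] at this
    exact this
  have hspan : ∀ v : V5, (∀ i, bR (ch i) v = 0) → ∃ x y : ℝ, v = x • wv 0 + y • wv 1 := by
    intro v hv
    have hmem : v ∈ LinearMap.ker L := by
      rw [LinearMap.mem_ker]
      funext i
      rw [hLapp]
      exact hv i
    have := bW.sum_repr ⟨v, hmem⟩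
    rw [Fin.sum_univ_two] at this
    refine ⟨bW.repr ⟨v, hmem⟩ 0, bW.repr ⟨v, hmem⟩ 1, ?_⟩
    have := congrArg (Subtype.val) this
    simp only [Submodule.coe_add, SetLike.val_smul] at this
    exact this.symm
  -- the combined family is a basis
  set vv : Fin 3 ⊕ Fin 2 → V5 := Sum.elim ch wv with hvv
  have hli : LinearIndependent ℝ vv := by
    rw [Fintype.linearIndependent_iff]
    intro g hg
    rw [Fintype.sum_sum_type] at hg
    have ha : ∀ k, (G *ᵥ (fun i => g (Sum.inl i))) k = 0 := by
      intro k
      have h1 := congrArg (bRl (ch k)) hg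
      rw [map_add, map_sum, map_sum, map_zero] at h1
      simp only [_root_.map_smul, smul_eq_mul, bRl_apply, hvv, Sum.elim_inl, Sum.elim_inr] at h1
      simp only [hWmem, mul_zero, Finset.sum_const_zero, add_zero] at h1
      simp only [Matrix.mulVec, dotProduct, hG, Matrix.of_apply]
      rw [← h1]
      apply Finset.sum_congr rfl
      intro j _
      ring
    have haz : ∀ i, g (Sum.inl i) = 0 := by
      intro i
      have h2 : G *ᵥ (fun i => g (Sum.inl i)) = 0 := funext ha
      have h3 := congrArg (fun x => G⁻¹ *ᵥ x) h2
      simp only [Matrix.mulVec_mulVec, hGG', Matrix.one_mulVec, Matrix.mulVec_zero] at h3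
      exact congrFun h3 i
    have hb : ∑ j : Fin 2, g (Sum.inr j) • vv (Sum.inr j) = 0 := by
      simp only [haz, zero_smul, Finset.sum_const_zero, zero_add] at hg
      exact hg
    have hbz : ∀ j, g (Sum.inr j) = 0 := by
      have hsum : ((∑ j : Fin 2, g (Sum.inr j) • bW j : LinearMap.ker L) : V5) = 0 := by
        push_cast
        simpa [hvv, hwv] using hb
      have hz : (∑ j : Fin 2, g (Sum.inr j) • bW j : LinearMap.ker L) = 0 :=
        Subtype.ext hsum
      exact Fintype.linearIndependent_iff.mp bW.linearIndependent _ hz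
    intro i
    rcases i with i | j
    · exact haz i
    · exact hbz j
  have hcard : Fintype.card (Fin 3 ⊕ Fin 2) = finrank ℝ V5 := by simp [h5]
  obtain ⟨bV, hbV⟩ : ∃ b : Basis (Fin 3 ⊕ Fin 2) ℝ V5, ⇑b = vv :=
    ⟨basisOfLinearIndependentOfCardEqFinrank hli hcard,
      coe_basisOfLinearIndependentOfCardEqFinrank hli hcard⟩
  have hpos : 0 < (Matrix.of fun i j => bR (bV i) (bV j)).det := by
    have h := gram_det_pos (bV.reindex finSumFinEquiv)
    rwa [gram_reindex bV] at h
  have hfact : (Matrix.of fun i j => bR (bV i) (bV j)).det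
      = G.det * (bR (wv 0) (wv 0) * bR (wv 1) (wv 1) - bR (wv 0) (wv 1) ^ 2) := by
    have hcoe : ∀ i, bV i = vv i := fun i => congrFun hbV i
    have : (Matrix.of fun i j => bR (bV i) (bV j))
        = (Matrix.of fun i j => bR (Sum.elim ch wv i) (Sum.elim ch wv j)) := by
      ext i j
      show bR (bV i) (bV j) = bR (Sum.elim ch wv i) (Sum.elim ch wv j)
      rw [hcoe, hcoe, hvv]
    rw [this, gram_block ch wv hWmem, hG]
  have hdisc : bR (wv 0) (wv 0) * bR (wv 1) (wv 1) < bR (wv 0) (wv 1) ^ 2 := by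
    rw [hfact] at hpos
    nlinarith
  exact ⟨wv 0, wv 1, fun i => hWmem 0 i, fun i => hWmem 1 i, hspan, hdisc⟩

end OA

/-- A binary quadratic form with positive discriminant vanishes exactly on two lines. -/
lemma two_lines {A B C : ℝ} (h : A * C < B ^ 2) :
    ∃ p q : ℝ × ℝ,
      (A * p.1 ^ 2 + 2 * B * p.1 * p.2 + C * p.2 ^ 2 = 0) ∧
      (A * q.1 ^ 2 + 2 * B * q.1 * q.2 + C * q.2 ^ 2 = 0) ∧
      p.1 * q.2 - p.2 * q.1 ≠ 0 ∧
      ∀ x y : ℝ, A * x ^ 2 + 2 * B * x * y + C * y ^ 2 = 0 →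
        (∃ t : ℝ, x = t * p.1 ∧ y = t * p.2) ∨ (∃ t : ℝ, x = t * q.1 ∧ y = t * q.2) := by
  set s := Real.sqrt (B ^ 2 - A * C) with hs
  have hs2 : s ^ 2 = B ^ 2 - A * C := Real.sq_sqrt (by linarith)
  have hspos : 0 < s := Real.sqrt_pos.mpr (by linarith)
  by_cases hA : A = 0
  · by_cases hC : C = 0
    · -- both zero, B ≠ 0
      have hB : B ≠ 0 := by
        intro hB; rw [hA, hB] at h; norm_num at h
      refine ⟨(1, 0), (0, 1), by norm_num [hA, hC], by norm_num [hA, hC], by norm_num, ?_⟩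
      intro x y hxy
      rw [hA, hC] at hxy
      have : x * y = 0 := by
        have h2 : (2 * B) * (x * y) = 0 := by linarith [hxy]
        rcases mul_eq_zero.mp h2 with h' | h'
        · exact absurd h' (by intro hh; apply hB; linarith)
        · exact h'
      rcases mul_eq_zero.mp this with h' | h'
      · right; exact ⟨y, by simp [h'], by simp⟩
      · left; exact ⟨x, by simp, by simp [h']⟩
    · -- A = 0, C ≠ 0
      subst hA
      have hs2' : s ^ 2 = B ^ 2 := by rw [hs2]; ring
      refine ⟨(C, s - B), (C, -s - B), by linear_combination C * hs2', by linear_combination C * hs2', ?_, ?_⟩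
      · have : C * (-s - B) - (s - B) * C = -2 * s * C := by ring
        rw [this]
        intro hcon
        rcases mul_eq_zero.mp hcon with h' | h'
        · rcases mul_eq_zero.mp h' with h'' | h'' <;> [norm_num at h''; linarith]
        · exact hC h'
      · intro x y hxy
        have hB : B ≠ 0 := by
          intro hB; rw [hB] at hs2'; simp at hs2'; nlinarith
        have hfac : y * (2 * B * x + C * y) = 0 := by linear_combination hxy
        have hsB : s = B ∨ s = -B := by
          have : (s - B) * (s + B) = 0 := by linear_combination hs2'
          rcases mul_eq_zero.mp this with h' | h'
          · left; linarith
          · right; linarith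
        rcases mul_eq_zero.mp hfac with hy | hl
        · -- y = 0 : (x, 0) is on the line whose second coord vanishes
          rcases hsB with hsB | hsB
          · left; exact ⟨x / C, by field_simp, by rw [hsB, hy]; ring⟩
          · right; exact ⟨x / C, by field_simp, by rw [hsB, hy]; ring⟩
        · -- 2Bx + Cy = 0 : proportional to (C, -2B)
          rcases hsB with hsB | hsB
          · right
            refine ⟨-y / (2 * B), ?_, ?_⟩
            · field_simp; linarith
            · rw [hsB]; field_simp; ring
          · left
            refine ⟨-y / (2 * B), ?_, ?_⟩
            · field_simp; linarith
            · rw [hsB]; field_simp; ring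
  · -- A ≠ 0
    refine ⟨(s - B, A), (-s - B, A), by linear_combination A * hs2, by linear_combination A * hs2, ?_, ?_⟩
    · have : (s - B) * A - A * (-s - B) = 2 * s * A := by ring
      rw [this]
      intro hcon
      rcases mul_eq_zero.mp hcon with h' | h'
      · rcases mul_eq_zero.mp h' with h'' | h'' <;> [norm_num at h''; linarith]
      · exact hA h'
    · intro x y hxy
      have key : (A * x + B * y - s * y) * (A * x + B * y + s * y) = 0 := by
        linear_combination A * hxy - y ^ 2 * hs2
      rcases mul_eq_zero.mp key with h' | h'
      · left
        refine ⟨y / A, ?_, by field_simp⟩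
        field_simp; linarith
      · right
        refine ⟨y / A, ?_, by field_simp⟩
        field_simp; linarith

namespace OA2
open OA

lemma bR_zero_left (w : OA.V5) : bR 0 w = 0 := by simp [bR]

lemma bR_lin_left (α β : ℝ) (u v w : OA.V5) :
    bR (α • u + β • v) w = α * bR u w + β * bR v w := by
  simp [bR, Pi.add_apply, Pi.smul_apply, smul_eq_mul]; ring

lemma bR_smul_right (t : ℝ) (w z : OA.V5) : bR w (t • z) = t * bR w z := by
  simp [bR, Pi.smul_apply, smul_eq_mul]; ring

lemma bR_smul_smul (t : ℝ) (z : OA.V5) : bR (t • z) (t • z) = t ^ 2 * bR z z := by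
  simp [bR, Pi.smul_apply, smul_eq_mul]; ring

lemma bR_expand (x y : ℝ) (w0 w1 : OA.V5) :
    bR (x • w0 + y • w1) (x • w0 + y • w1) =
      bR w0 w0 * x ^ 2 + 2 * bR w0 w1 * x * y + bR w1 w1 * y ^ 2 := by
  simp [bR, Pi.add_apply, Pi.smul_apply, smul_eq_mul]; ring

lemma card_X_eq_two (c₁ c₂ c₃ : Pl × ℝ) (w0 w1 : OA.V5)
    (hw0 : ∀ i, bR (chat c₁ c₂ c₃ i) w0 = 0)
    (hw1 : ∀ i, bR (chat c₁ c₂ c₃ i) w1 = 0)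
    (hspan : ∀ v : OA.V5, (∀ i, bR (chat c₁ c₂ c₃ i) v = 0) → ∃ x y : ℝ, v = x • w0 + y • w1)
    (hdisc : bR w0 w0 * bR w1 w1 < bR w0 w1 ^ 2) :
    Nat.card (X c₁ c₂ c₃) = 2 := by
  obtain ⟨p, q, hp, hq, hcross, hcl⟩ := two_lines hdisc
  have hindep : ∀ α β : ℝ, α • w0 + β • w1 = 0 → α = 0 ∧ β = 0 := by
    intro α β hz
    have e1 : α * bR w0 w0 + β * bR w1 w0 = 0 := by
      rw [← bR_lin_left, hz, bR_zero_left]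
    have e2 : α * bR w0 w1 + β * bR w1 w1 = 0 := by
      rw [← bR_lin_left, hz, bR_zero_left]
    have hBsym : bR w1 w0 = bR w0 w1 := bR_comm w1 w0
    rw [hBsym] at e1
    have hne : bR w0 w0 * bR w1 w1 - bR w0 w1 ^ 2 ≠ 0 := by intro hh; nlinarith
    constructor
    · have : α * (bR w0 w0 * bR w1 w1 - bR w0 w1 ^ 2) = 0 := by
        linear_combination bR w1 w1 * e1 - bR w0 w1 * e2
      exact (mul_eq_zero.mp this).resolve_right hne
    · have : β * (bR w0 w0 * bR w1 w1 - bR w0 w1 ^ 2) = 0 := by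
        linear_combination bR w0 w0 * e2 - bR w0 w1 * e1
      exact (mul_eq_zero.mp this).resolve_right hne
  set p5 : OA.V5 := p.1 • w0 + p.2 • w1 with hp5
  set q5 : OA.V5 := q.1 • w0 + q.2 • w1 with hq5
  have hmemW : ∀ (x y : ℝ) (i : Fin 3), bR (chat c₁ c₂ c₃ i) (x • w0 + y • w1) = 0 := by
    intro x y i
    have : bR (chat c₁ c₂ c₃ i) (x • w0 + y • w1)
        = x * bR (chat c₁ c₂ c₃ i) w0 + y * bR (chat c₁ c₂ c₃ i) w1 := by
      simp [bR, Pi.add_apply, Pi.smul_apply, smul_eq_mul]; ring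
    rw [this, hw0 i, hw1 i]; ring
  have hp5ne : p5 ≠ 0 := by
    intro hz
    obtain ⟨h1, h2⟩ := hindep p.1 p.2 hz
    rw [h1, h2] at hcross; norm_num at hcross
  have hq5ne : q5 ≠ 0 := by
    intro hz
    obtain ⟨h1, h2⟩ := hindep q.1 q.2 hz
    rw [h1, h2] at hcross; norm_num at hcross
  have hp5null : bR p5 p5 = 0 := by rw [hp5, bR_expand]; linear_combination hp
  have hq5null : bR q5 q5 = 0 := by rw [hq5, bR_expand]; linear_combination hq
  have nondeg : ∀ v : OA.V5, (∀ i, bR (chat c₁ c₂ c₃ i) v = 0) → bR v v = 0 →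
      v 0 = 0 → v 4 = 0 → v = 0 := by
    intro v hv hnull h0 h4
    have h23 : v 2 ^ 2 + v 3 ^ 2 = 0 := by
      unfold bR at hnull; rw [h0, h4] at hnull; linarith
    have h2 : v 2 = 0 := by nlinarith
    have h3 : v 3 = 0 := by nlinarith
    have h1 : v 1 = 0 := by
      have := hv 0
      simp only [chat, Matrix.cons_val_zero] at this
      unfold bR at this
      rw [lift_0, lift_2, lift_3, lift_4, h0, h2, h3, h4] at this
      linarith
    funext i; fin_cases i <;> simp [h0, h1, h2, h3, h4]
  have hnorm : ∀ z : OA.V5, (∀ i, bR (chat c₁ c₂ c₃ i) z = 0) → bR z z = 0 → z ≠ 0 →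
      ∃ (n : OA.V5) (t : ℝ), t ≠ 0 ∧ n = t • z ∧ n ∈ X c₁ c₂ c₃ := by
    intro z hzW hznull hzne
    by_cases hz0 : z 0 = 0
    · have hz4 : z 4 ≠ 0 := fun h4 => hzne (nondeg z hzW hznull hz0 h4)
      refine ⟨(z 4)⁻¹ • z, (z 4)⁻¹, inv_ne_zero hz4, rfl, ?_, ?_, ?_⟩
      · intro i; rw [bR_smul_right, hzW i]; ring
      · rw [bR_smul_smul, hznull]; ring
      · right
        constructor
        · show (z 4)⁻¹ * z 0 = 0; rw [hz0]; ring
        · show (z 4)⁻¹ * z 4 = 1; field_simp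
    · refine ⟨(z 0)⁻¹ • z, (z 0)⁻¹, inv_ne_zero hz0, rfl, ?_, ?_, ?_⟩
      · intro i; rw [bR_smul_right, hzW i]; ring
      · rw [bR_smul_smul, hznull]; ring
      · left; show (z 0)⁻¹ * z 0 = 1; field_simp
  have huniq : ∀ (v n : OA.V5) (t : ℝ),
      (v 0 = 1 ∨ (v 0 = 0 ∧ v 4 = 1)) → (n 0 = 1 ∨ (n 0 = 0 ∧ n 4 = 1)) →
      v = t • n → v = n := by
    rintro v n t (hv | ⟨hv0, hv4⟩) (hn | ⟨hn0, hn4⟩) heq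
    · have : t = 1 := by
        have := congrFun heq 0
        rw [hv] at this
        simp only [Pi.smul_apply, smul_eq_mul, hn, mul_one] at this
        linarith
      rw [heq, this, one_smul]
    · have : (1 : ℝ) = 0 := by
        have := congrFun heq 0
        rw [hv] at this
        simp only [Pi.smul_apply, smul_eq_mul, hn0, mul_zero] at this
        linarith
      norm_num at this
    · have ht : t = 0 := by
        have := congrFun heq 0
        rw [hv0] at this
        simp only [Pi.smul_apply, smul_eq_mul, hn, mul_one] at this
        linarith
      have : (1 : ℝ) = 0 := by
        have := congrFun heq 4
        rw [hv4, ht] at this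
        set_option linter.unnecessarySimpa false in
        simpa using this
      norm_num at this
    · have : t = 1 := by
        have := congrFun heq 4
        rw [hv4] at this
        simp only [Pi.smul_apply, smul_eq_mul, hn4, mul_one] at this
        linarith
      rw [heq, this, one_smul]
  obtain ⟨nP, tP, htP, hnPdef, hnPX⟩ := hnorm p5 (fun i => hmemW _ _ i) hp5null hp5ne
  obtain ⟨nQ, tQ, htQ, hnQdef, hnQX⟩ := hnorm q5 (fun i => hmemW _ _ i) hq5null hq5ne
  have hne : nP ≠ nQ := by
    intro he
    have heq : tP • p5 = tQ • q5 := by rw [← hnPdef, ← hnQdef, he]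
    have hp5q5 : p5 = (tP⁻¹ * tQ) • q5 := by
      have h2 := congrArg (fun z : OA.V5 => tP⁻¹ • z) heq
      simpa [smul_smul, inv_mul_cancel₀ htP] using h2
    set r := tP⁻¹ * tQ with hr
    have h0 : (p.1 • w0 + p.2 • w1) - ((r * q.1) • w0 + (r * q.2) • w1) = 0 := by
      rw [sub_eq_zero]
      rw [hp5, smul_add, smul_smul, smul_smul] at hp5q5
      exact hp5q5
    have hz : (p.1 - r * q.1) • w0 + (p.2 - r * q.2) • w1 = 0 := by
      rw [sub_smul, sub_smul, ← h0]; abel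
    obtain ⟨h1, h2⟩ := hindep _ _ hz
    apply hcross
    have e1 : p.1 = r * q.1 := by linarith
    have e2 : p.2 = r * q.2 := by linarith
    rw [e1, e2]; ring
  have hXeq : X c₁ c₂ c₃ = {nP, nQ} := by
    apply Set.eq_of_subset_of_subset
    · rintro v ⟨hvW, hvnull, hvnorm⟩
      obtain ⟨x, y, hxy⟩ := hspan v hvW
      have hnull2 : bR w0 w0 * x ^ 2 + 2 * bR w0 w1 * x * y + bR w1 w1 * y ^ 2 = 0 := by
        rw [← bR_expand x y w0 w1, ← hxy]; exact hvnull
      have hvne : v ≠ 0 := by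
        intro h0
        rcases hvnorm with h | ⟨_, h⟩ <;> (rw [h0] at h; simp at h)
      rcases hcl x y hnull2 with ⟨t, hx, hy⟩ | ⟨t, hx, hy⟩
      · have hv5 : v = t • p5 := by
          rw [hxy, hx, hy, hp5, smul_add, smul_smul, smul_smul]
        have hv' : v = (t * tP⁻¹) • nP := by
          rw [hnPdef, smul_smul, hv5]
          congr 1
          field_simp
        exact Set.mem_insert_iff.mpr (Or.inl (huniq v nP _ hvnorm hnPX.2.2 hv'))
      · have hv5 : v = t • q5 := by
          rw [hxy, hx, hy, hq5, smul_add, smul_smul, smul_smul]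
        have hv' : v = (t * tQ⁻¹) • nQ := by
          rw [hnQdef, smul_smul, hv5]
          congr 1
          field_simp
        exact Set.mem_insert_iff.mpr (Or.inr (huniq v nQ _ hvnorm hnQX.2.2 hv'))
    · intro v hv
      rcases Set.mem_insert_iff.mp hv with h | h
      · rw [h]; exact hnPX
      · rw [Set.mem_singleton_iff.mp h]; exact hnQX
  rw [hXeq, Nat.card_coe_set_eq, Set.ncard_pair hne]

end OA2

/-- If the discriminant `D = Q(c₁ − c₂) · Q(c₁ − c₃) · Q(c₂ − c₃)` is strictly positive,
the oriented Apollonius problem has exactly 2 solutions. -/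
theorem oriented_apollonius_two_solutions (c₁ c₂ c₃ : Pl × ℝ)
    (hD : 0 < Q (c₁ - c₂) * Q (c₁ - c₃) * Q (c₂ - c₃)) :
    Nat.card (OrientedApolloniusSolutions c₁ c₂ c₃) = 2 := by
  rw [OA.card_sol]
  obtain ⟨w0, w1, h0, h1, hs, hd⟩ := OA.exists_basis c₁ c₂ c₃ hD
  exact OA2.card_X_eq_two c₁ c₂ c₃ w0 w1 h0 h1 hs hd
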